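/- Let N ≥ 1, let F : 𝕊(N) → ℝ, let λ > 0 and h ∈ ℝ, and suppose that for all B, M ∈ 𝕊(N) with B ≤ M one has F(B) − F(M) ≥ λ·tr(M − B) + h. Then for all Y, M ∈ 𝕊(N) with −Y ≤ M: −F(Y) ≥ λ·λ_N(Y) + λ·λ₁(M) + h − F(−M), where λ₁ and λ_N denote the smallest and largest eigenvalue respectively. -/

import Mathlib

open Matrix

/-- The Loewner partial order on matrices: `X ≤ Y` iff `Y - X` is positive semidefinite. -/
def Loewner {n : Type*} [Fintype n] (X Y : Matrix n n ℝ) : Prop := (Y - X).PosSemidef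

/-- The eigenvalues of a real symmetric matrix, listed in increasing order. -/
noncomputable def eigs {N : ℕ} (X : Matrix (Fin N) (Fin N) ℝ) : Fin N → ℝ :=
  if h : X.IsHermitian then h.eigenvalues ∘ Tuple.sort h.eigenvalues else 0

/-- The smallest eigenvalue of a real symmetric matrix. -/
noncomputable def lam1 {N : ℕ} (X : Matrix (Fin N) (Fin N) ℝ) : ℝ := ⨅ i, eigs X i

/-- The largest eigenvalue of a real symmetric matrix. -/
noncomputable def lamN {N : ℕ} (X : Matrix (Fin N) (Fin N) ℝ) : ℝ := ⨆ i, eigs X i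

private lemma trace_eq_sum_eigs {N : ℕ} {A : Matrix (Fin N) (Fin N) ℝ} (hA : A.IsHermitian) :
    A.trace = ∑ i, hA.eigenvalues i := by
  conv_lhs => rw [hA.spectral_theorem, Unitary.conjStarAlgAut_apply]
  rw [Matrix.trace_mul_cycle]
  rw [show (star (hA.eigenvectorUnitary : Matrix (Fin N) (Fin N) ℝ)) *
      (hA.eigenvectorUnitary : Matrix (Fin N) (Fin N) ℝ) = 1 from
    Unitary.coe_star_mul_self _, one_mul, Matrix.trace_diagonal]
  simp

private lemma conj_diag {N : ℕ} {A : Matrix (Fin N) (Fin N) ℝ} (hA : A.IsHermitian) (c : ℝ) :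
    (hA.eigenvectorUnitary : Matrix (Fin N) (Fin N) ℝ) *
        Matrix.diagonal (fun i => hA.eigenvalues i - c) *
        (hA.eigenvectorUnitary : Matrix (Fin N) (Fin N) ℝ)ᴴ = A - c • 1 := by
  have hsp := hA.spectral_theorem
  rw [Unitary.conjStarAlgAut_apply] at hsp
  have hu : (hA.eigenvectorUnitary : Matrix (Fin N) (Fin N) ℝ) *
      (star (hA.eigenvectorUnitary : Matrix (Fin N) (Fin N) ℝ)) = 1 :=
    Unitary.coe_mul_star_self _
  have : Matrix.diagonal (fun i => hA.eigenvalues i - c) =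
      Matrix.diagonal ((RCLike.ofReal ∘ hA.eigenvalues : Fin N → ℝ)) - c • 1 := by
    simp [Matrix.diagonal_sub, Matrix.smul_eq_diagonal_mul]
  rw [this, Matrix.mul_sub, Matrix.sub_mul, ← Matrix.star_eq_conjTranspose, ← hsp]
  congr 1
  rw [Matrix.mul_smul, Matrix.mul_one, Matrix.smul_mul, hu]

private lemma rayleigh_lower {N : ℕ} {A : Matrix (Fin N) (Fin N) ℝ} (hA : A.IsHermitian) {c : ℝ}
    (hc : ∀ i, c ≤ hA.eigenvalues i) (x : Fin N → ℝ) :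
    c * (x ⬝ᵥ x) ≤ x ⬝ᵥ (A *ᵥ x) := by
  have h1 : (A - c • 1).PosSemidef := by
    have hd : (Matrix.diagonal (fun i => hA.eigenvalues i - c)).PosSemidef :=
      Matrix.PosSemidef.diagonal (fun i => sub_nonneg.mpr (hc i))
    have h2 := hd.mul_mul_conjTranspose_same (hA.eigenvectorUnitary : Matrix (Fin N) (Fin N) ℝ)
    rwa [conj_diag hA c] at h2
  have := h1.dotProduct_mulVec_nonneg x
  rw [star_trivial, Matrix.sub_mulVec, dotProduct_sub, Matrix.smul_mulVec,
    Matrix.one_mulVec, dotProduct_smul, smul_eq_mul, sub_nonneg] at this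
  exact this

private lemma rayleigh_upper {N : ℕ} {A : Matrix (Fin N) (Fin N) ℝ} (hA : A.IsHermitian) {c : ℝ}
    (hc : ∀ i, hA.eigenvalues i ≤ c) (x : Fin N → ℝ) :
    x ⬝ᵥ (A *ᵥ x) ≤ c * (x ⬝ᵥ x) := by
  have h1 : (c • 1 - A).PosSemidef := by
    have hd : (Matrix.diagonal (fun i => c - hA.eigenvalues i)).PosSemidef :=
      Matrix.PosSemidef.diagonal (fun i => sub_nonneg.mpr (hc i))
    have h3 : Matrix.diagonal (fun i => c - hA.eigenvalues i) =
        -Matrix.diagonal (fun i => hA.eigenvalues i - c) := by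
      ext i j
      by_cases hij : i = j
      · subst hij; simp
      · simp [Matrix.diagonal_apply_ne _ hij]
    have h2 := hd.mul_mul_conjTranspose_same (hA.eigenvectorUnitary : Matrix (Fin N) (Fin N) ℝ)
    rw [h3, Matrix.mul_neg, Matrix.neg_mul, conj_diag hA c, neg_sub] at h2
    exact h2
  have := h1.dotProduct_mulVec_nonneg x
  rw [star_trivial, Matrix.sub_mulVec, dotProduct_sub, Matrix.smul_mulVec,
    Matrix.one_mulVec, dotProduct_smul, smul_eq_mul, sub_nonneg] at this
  exact this

/-- The supersolution half of "Class U ⊆ Class M". -/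
theorem classU_subset_classM_supersolution {N : ℕ} (hN : 1 ≤ N)
    (F : Matrix (Fin N) (Fin N) ℝ → ℝ) (lam h : ℝ) (hlam : 0 < lam)
    (hF : ∀ B M : Matrix (Fin N) (Fin N) ℝ, B.IsHermitian → M.IsHermitian →
      Loewner B M → F B - F M ≥ lam * (M - B).trace + h) :
    ∀ Y M : Matrix (Fin N) (Fin N) ℝ, Y.IsHermitian → M.IsHermitian → Loewner (-Y) M →
      -F Y ≥ lam * lamN Y + lam * lam1 M + h - F (-M) := by
  intro Y M hY hM hL
  haveI : NeZero N := ⟨by omega⟩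
  haveI : Nonempty (Fin N) := ⟨⟨0, by omega⟩⟩
  have hpsd : (Y + M).PosSemidef := by
    rw [Loewner, sub_neg_eq_add, add_comm] at hL; exact hL
  -- eigs facts
  have heY : eigs Y = hY.eigenvalues ∘ Tuple.sort hY.eigenvalues := dif_pos hY
  have heM : eigs M = hM.eigenvalues ∘ Tuple.sort hM.eigenvalues := dif_pos hM
  -- lamN Y is attained
  obtain ⟨j₀, hj₀⟩ := Finite.exists_max hY.eigenvalues
  have hlamN : lamN Y = hY.eigenvalues j₀ := by
    apply le_antisymm
    · apply ciSup_le
      intro i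
      rw [heY]; exact hj₀ _
    · calc hY.eigenvalues j₀ = eigs Y ((Tuple.sort hY.eigenvalues)⁻¹ j₀) := by
            rw [heY]; simp
        _ ≤ lamN Y := le_ciSup (Set.Finite.bddAbove (Set.finite_range _)) _
  -- lam1 M is a lower bound of all eigenvalues of M
  have hlam1 : ∀ i, lam1 M ≤ hM.eigenvalues i := by
    intro i
    calc lam1 M ≤ eigs M ((Tuple.sort hM.eigenvalues)⁻¹ i) :=
          ciInf_le (Set.Finite.bddBelow (Set.finite_range _)) _
      _ = hM.eigenvalues i := by rw [heM]; simp
  -- the eigenvector v of Y for the top eigenvalue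
  set v : Fin N → ℝ := ⇑(hY.eigenvectorBasis j₀) with hv
  have hvv : v ⬝ᵥ v = 1 := by
    have h1 := hY.eigenvectorBasis.orthonormal.1 j₀
    have h2 : (1:ℝ) = ‖hY.eigenvectorBasis j₀‖ ^ 2 := by rw [h1]; norm_num
    rw [← real_inner_self_eq_norm_sq, PiLp.inner_apply] at h2
    simp only [RCLike.inner_apply, conj_trivial] at h2
    rw [dotProduct]
    exact h2.symm
  have hYv : v ⬝ᵥ (Y *ᵥ v) = hY.eigenvalues j₀ := by
    have := hY.eigenvalues_eq j₀
    simpa [hv] using this.symm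
  have hMv : lam1 M ≤ v ⬝ᵥ (M *ᵥ v) := by
    have := rayleigh_lower hM hlam1 v
    rwa [hvv, mul_one] at this
  -- top eigenvalue of Y + M
  have hAH : (Y + M).IsHermitian := hpsd.1
  obtain ⟨k₀, hk₀⟩ := Finite.exists_max hAH.eigenvalues
  have hAv : v ⬝ᵥ ((Y + M) *ᵥ v) ≤ hAH.eigenvalues k₀ := by
    have := rayleigh_upper hAH (fun i => hk₀ i) v
    rwa [hvv, mul_one] at this
  have htr : hAH.eigenvalues k₀ ≤ (Y + M).trace := by
    rw [trace_eq_sum_eigs hAH]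
    exact Finset.single_le_sum (fun i _ => hpsd.eigenvalues_nonneg i) (Finset.mem_univ k₀)
  have hsplit : v ⬝ᵥ ((Y + M) *ᵥ v) = v ⬝ᵥ (Y *ᵥ v) + v ⬝ᵥ (M *ᵥ v) := by
    rw [Matrix.add_mulVec, dotProduct_add]
  have key : lamN Y + lam1 M ≤ (Y + M).trace := by
    rw [hlamN]
    calc hY.eigenvalues j₀ + lam1 M ≤ v ⬝ᵥ (Y *ᵥ v) + v ⬝ᵥ (M *ᵥ v) := by
          rw [hYv]; linarith
      _ = v ⬝ᵥ ((Y + M) *ᵥ v) := hsplit.symm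
      _ ≤ hAH.eigenvalues k₀ := hAv
      _ ≤ (Y + M).trace := htr
  have hF' := hF (-M) Y hM.neg hY (by rw [Loewner, sub_neg_eq_add]; exact hpsd)
  rw [sub_neg_eq_add] at hF'
  have hmul : lam * (lamN Y + lam1 M) ≤ lam * (Y + M).trace :=
    mul_le_mul_of_nonneg_left key hlam.le
  have : (Y + M).trace = Y.trace + M.trace := Matrix.trace_add Y M
  nlinarith [hF', hmul]
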